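/- Take n = 2, \mathbf{k} = (3,2), \mathbf{c} = (1/4, 1/27), and for each prime p let \mathcal{U}_p = {(A,B) \in \mathbb{Z}_p^2 : 4A^3 + 27B^2 = 0} \cup (p^4\mathbb{Z}_p \times p^6\mathbb{Z}_p). Then the triple (\mathcal{U},\mathbf{k},\mathbf{c}) is Ekedahl-admissible. -/

import Mathlib

open MeasureTheory Filter Topology

noncomputable section

instance (p : Nat.Primes) : Fact (p : ℕ).Prime := ⟨p.2⟩
instance (p : ℕ) [Fact p.Prime] : MeasurableSpace ℤ_[p] := borel _
instance (p : ℕ) [Fact p.Prime] : BorelSpace ℤ_[p] := ⟨rfl⟩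

/-- The set of lattice points of the box `V_{k,c}(X) = ∏ᵢ [-(cᵢX)^{1/kᵢ}, (cᵢX)^{1/kᵢ}]`. -/
def latticeBox (n : ℕ) (k : Fin n → ℕ) (c : Fin n → ℝ) (X : ℝ) : Set (Fin n → ℤ) :=
  {x | ∀ i, |(x i : ℝ)| ≤ (c i * X) ^ ((k i : ℝ)⁻¹)}

/-- The volume of the box `V_{k,c}(X)`. -/
def boxVol (n : ℕ) (k : Fin n → ℕ) (c : Fin n → ℝ) (X : ℝ) : ℝ :=
  ∏ i : Fin n, (2 * (c i * X) ^ ((k i : ℝ)⁻¹))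

/-- The diagonal embedding `ℤ^n → ℤ_p^n`. -/
def padicEmbed (n : ℕ) (p : Nat.Primes) (x : Fin n → ℤ) : Fin n → ℤ_[p] :=
  fun i => ((x i : ℤ) : ℤ_[p])

/-- The sieved set `V^𝒰_{k,c}(X)` of lattice points in the box avoiding every `𝒰_p`. -/
def sievedBox (n : ℕ) (k : Fin n → ℕ) (c : Fin n → ℝ)
    (U : (p : Nat.Primes) → Set (Fin n → ℤ_[p])) (X : ℝ) : Set (Fin n → ℤ) :=
  {x | x ∈ latticeBox n k c X ∧ ∀ p : Nat.Primes, padicEmbed n p x ∉ U p}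

/-- Ekedahl admissibility of the triple `(𝒰, k, c)`. -/
def EkedahlAdmissible (n : ℕ) (k : Fin n → ℕ) (c : Fin n → ℝ)
    (U : (p : Nat.Primes) → Set (Fin n → ℤ_[p])) : Prop :=
  Tendsto (fun Y : ℝ =>
      limsup (fun X : ℝ =>
        (({x ∈ latticeBox n k c X |
            ∃ p : Nat.Primes, Y < (p : ℕ) ∧ padicEmbed n p x ∈ U p}).ncard : ℝ)
          / boxVol n k c X) atTop)
    atTop (𝓝 0)


/-- The triple cutting out (the coefficient space of) the family of all elliptic curves over `ℚ`
is Ekedahl-admissible: here `n = 2`, `k = (3,2)`, `c = (1/4, 1/27)`, and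
`𝒰_p = {(A,B) : 4A³ + 27B² = 0} ∪ (p⁴ℤ_p × p⁶ℤ_p)`. -/
def Uell (p : Nat.Primes) : Set (Fin 2 → ℤ_[p]) :=
  {x : Fin 2 → ℤ_[p] | 4 * (x 0) ^ 3 + 27 * (x 1) ^ 2 = 0 ∨
      ((p : ℤ_[p]) ^ 4 ∣ x 0 ∧ (p : ℤ_[p]) ^ 6 ∣ x 1)}

def MaR (X : ℝ) : ℝ := (1/4 * X) ^ ((3:ℝ)⁻¹)
def MbR (X : ℝ) : ℝ := (1/27 * X) ^ ((2:ℝ)⁻¹)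

lemma mem_Uell_iff (p : Nat.Primes) (x : Fin 2 → ℤ) :
    padicEmbed 2 p x ∈ Uell p ↔
      (4 * (x 0)^3 + 27 * (x 1)^2 = 0 ∨ (((p:ℕ):ℤ)^4 ∣ x 0 ∧ ((p:ℕ):ℤ)^6 ∣ x 1)) := by
  simp only [Uell, padicEmbed, Set.mem_setOf_eq]
  have h1 : (4 * ((x 0 : ℤ) : ℤ_[p])^3 + 27 * ((x 1 : ℤ) : ℤ_[p])^2 = 0) ↔
      4*(x 0)^3+27*(x 1)^2 = 0 := by
    rw [show (4 * ((x 0 : ℤ) : ℤ_[p])^3 + 27 * ((x 1 : ℤ) : ℤ_[p])^2)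
        = ((4*(x 0)^3+27*(x 1)^2 : ℤ) : ℤ_[p]) by push_cast; ring, Int.cast_eq_zero]
  have h2 := PadicInt.pow_p_dvd_int_iff (p := (p:ℕ)) 4 (x 0)
  have h3 := PadicInt.pow_p_dvd_int_iff (p := (p:ℕ)) 6 (x 1)
  rw [h1, h2, h3]

lemma mem_latticeBox_iff (X : ℝ) (x : Fin 2 → ℤ) :
    x ∈ latticeBox 2 ![3,2] ![1/4,1/27] X ↔ |(x 0 : ℝ)| ≤ MaR X ∧ |(x 1 : ℝ)| ≤ MbR X := by
  simp [latticeBox, Fin.forall_fin_two, MaR, MbR]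

lemma boxVol_eq (X : ℝ) : boxVol 2 ![3,2] ![1/4,1/27] X = 4 * MaR X * MbR X := by
  simp [boxVol, Fin.prod_univ_two, MaR, MbR]
  ring


lemma ncard_biUnion_le {ι α : Type*} (s : Finset ι) (t : ι → Set α) :
    (⋃ i ∈ s, t i).ncard ≤ ∑ i ∈ s, (t i).ncard := by
  classical
  induction s using Finset.induction_on with
  | empty => simp
  | insert _ _ h ih =>
    rename_i a s'
    rw [Finset.set_biUnion_insert, Finset.sum_insert h]
    exact (Set.ncard_union_le _ _).trans (by omega)

lemma E1_count (a : ℤ) (α : ℝ) (ha : 0 ≤ a) (haR : (a:ℝ) ≤ α) :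
    (setOf fun x : Fin 2 → ℤ => x 0 ∈ Set.Icc (-a) a ∧ 27*(x 1)^2 = -(4*(x 0)^3)).Finite ∧
    (((setOf fun x : Fin 2 → ℤ => x 0 ∈ Set.Icc (-a) a ∧ 27*(x 1)^2 = -(4*(x 0)^3)).ncard : ℝ))
      ≤ 2*(2*α+1) := by
  classical
  set S := setOf fun x : Fin 2 → ℤ => x 0 ∈ Set.Icc (-a) a ∧ 27*(x 1)^2 = -(4*(x 0)^3) with hS
  set G : Finset (ℤ × Bool) := Finset.Icc (-a) a ×ˢ (Finset.univ : Finset Bool) with hG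
  have hmap : ∀ x ∈ S, (x 0, decide (0 ≤ x 1)) ∈ (G : Set (ℤ × Bool)) := by
    intro x hx
    simp only [hG, Finset.coe_product, Set.mem_prod, Finset.coe_Icc]
    exact ⟨hx.1, Finset.mem_coe.2 (Finset.mem_univ _)⟩
  have hinj : Set.InjOn (fun x : Fin 2 → ℤ => (x 0, decide (0 ≤ x 1))) S := by
    intro x hx y hy hxy
    simp only [Prod.mk.injEq] at hxy
    obtain ⟨h0, hb⟩ := hxy
    have hiff : (0 ≤ x 1) ↔ (0 ≤ y 1) := by
      constructor <;> intro h <;> simp [h] at hb <;> simp_all [decide_eq_decide] 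
    have hsq : (x 1 - y 1) * (x 1 + y 1) = 0 := by
      have e1 := hx.2
      have e2 := hy.2
      rw [h0] at e1
      nlinarith [e1, e2]
    have : x 1 = y 1 ∨ x 1 = -(y 1) := by
      rcases mul_eq_zero.1 hsq with h | h
      · left; omega
      · right; omega
    have h1 : x 1 = y 1 := by omega
    funext i
    fin_cases i <;> assumption
  have hfin : S.Finite := Set.Finite.of_finite_image
    ((G.finite_toSet).subset (Set.image_subset_iff.2 hmap)) hinj
  refine ⟨hfin, ?_⟩
  have hle := Set.ncard_le_ncard_of_injOn _ hmap hinj (G.finite_toSet)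
  rw [Set.ncard_coe_finset, hG, Finset.card_product, Int.card_Icc] at hle
  have : ((a + 1 - -a).toNat : ℝ) = 2*(a:ℝ)+1 := by
    rw [show a + 1 - -a = 2*a+1 by ring]
    rw [show ((2*a+1).toNat : ℝ) = (((2*a+1).toNat : ℤ) : ℝ) by norm_cast,
      Int.toNat_of_nonneg (by omega)]
    push_cast; ring
  calc (S.ncard : ℝ) ≤ (((a + 1 - -a).toNat * Finset.univ.card : ℕ) : ℝ) := by exact_mod_cast hle
    _ = 2*(2*(a:ℝ)+1) := by rw [Nat.cast_mul, this]; simp [Finset.card_univ]; ring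
    _ ≤ 2*(2*α+1) := by linarith

lemma Tq_count (a b : ℤ) (α β : ℝ) (ha : 0 ≤ a) (hb : 0 ≤ b) (haR : (a:ℝ) ≤ α) (hbR : (b:ℝ) ≤ β) (q : ℕ) (hq : 1 ≤ q) :
    (setOf fun x : Fin 2 → ℤ =>
        x 0 ∈ Set.Icc (-a) a ∧ x 1 ∈ Set.Icc (-b) b ∧ (q:ℤ)^4 ∣ x 0 ∧ (q:ℤ)^6 ∣ x 1).Finite ∧
    (((setOf fun x : Fin 2 → ℤ =>
        x 0 ∈ Set.Icc (-a) a ∧ x 1 ∈ Set.Icc (-b) b ∧ (q:ℤ)^4 ∣ x 0 ∧ (q:ℤ)^6 ∣ x 1).ncard : ℝ))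
      ≤ (2*α/(q:ℝ)^4+1) * (2*β/(q:ℝ)^6+1) := by
  classical
  have hq4 : (0:ℤ) < (q:ℤ)^4 := by positivity
  have hq6 : (0:ℤ) < (q:ℤ)^6 := by positivity
  set S := setOf fun x : Fin 2 → ℤ =>
      x 0 ∈ Set.Icc (-a) a ∧ x 1 ∈ Set.Icc (-b) b ∧ (q:ℤ)^4 ∣ x 0 ∧ (q:ℤ)^6 ∣ x 1 with hSdef
  set A := a / (q:ℤ)^4 with hA
  set B := b / (q:ℤ)^6 with hB
  set G : Finset (ℤ × ℤ) := Finset.Icc (-A) A ×ˢ Finset.Icc (-B) B with hG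
  set f : (Fin 2 → ℤ) → ℤ × ℤ := fun x => (x 0 / (q:ℤ)^4, x 1 / (q:ℤ)^6) with hf
  have key : ∀ (m M d : ℤ), 0 < d → d ∣ m → -M ≤ m → m ≤ M → -(M/d) ≤ m/d ∧ m/d ≤ M/d := by
    intro m M d hd hdvd h1 h2
    constructor
    · rw [neg_le, ← Int.neg_ediv_of_dvd hdvd, Int.le_ediv_iff_mul_le hd,
        Int.ediv_mul_cancel (dvd_neg.2 hdvd)]
      omega
    · rw [Int.le_ediv_iff_mul_le hd, Int.ediv_mul_cancel hdvd]
      exact h2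
  have hmap : ∀ x ∈ S, f x ∈ (G : Set (ℤ × ℤ)) := by
    intro x hx
    obtain ⟨⟨u1, u2⟩, ⟨v1, v2⟩, d1, d2⟩ := hx
    have k1 := key (x 0) a _ hq4 d1 u1 u2
    have k2 := key (x 1) b _ hq6 d2 v1 v2
    simp only [hG, Finset.coe_product, Set.mem_prod, Finset.mem_coe, Finset.mem_Icc, hf]
    exact ⟨⟨k1.1, k1.2⟩, ⟨k2.1, k2.2⟩⟩
  have hinj : Set.InjOn f S := by
    intro x hx y hy hxy
    simp only [hf, Prod.mk.injEq] at hxy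
    have e0 : x 0 = y 0 := by
      have := congrArg (· * (q:ℤ)^4) hxy.1
      simpa [Int.ediv_mul_cancel hx.2.2.1, Int.ediv_mul_cancel hy.2.2.1] using this
    have e1 : x 1 = y 1 := by
      have := congrArg (· * (q:ℤ)^6) hxy.2
      simpa [Int.ediv_mul_cancel hx.2.2.2, Int.ediv_mul_cancel hy.2.2.2] using this
    funext i; fin_cases i <;> assumption
  have hfin : S.Finite := Set.Finite.of_finite_image
    ((G.finite_toSet).subset (Set.image_subset_iff.2 hmap)) hinj
  refine ⟨hfin, ?_⟩
  have hle := Set.ncard_le_ncard_of_injOn _ hmap hinj (G.finite_toSet)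
  rw [Set.ncard_coe_finset, hG, Finset.card_product, Int.card_Icc, Int.card_Icc] at hle
  have hAnn : 0 ≤ A := Int.ediv_nonneg ha (le_of_lt hq4)
  have hBnn : 0 ≤ B := Int.ediv_nonneg hb (le_of_lt hq6)
  have cA : ((A + 1 - -A).toNat : ℝ) = 2*(A:ℝ)+1 := by
    rw [show A + 1 - -A = 2*A+1 by ring,
      show ((2*A+1).toNat : ℝ) = (((2*A+1).toNat : ℤ) : ℝ) by norm_cast,
      Int.toNat_of_nonneg (by omega)]
    push_cast; ring
  have cB : ((B + 1 - -B).toNat : ℝ) = 2*(B:ℝ)+1 := by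
    rw [show B + 1 - -B = 2*B+1 by ring,
      show ((2*B+1).toNat : ℝ) = (((2*B+1).toNat : ℤ) : ℝ) by norm_cast,
      Int.toNat_of_nonneg (by omega)]
    push_cast; ring
  have hq4R : (0:ℝ) < (q:ℝ)^4 := by positivity
  have hq6R : (0:ℝ) < (q:ℝ)^6 := by positivity
  have bA : ((A:ℤ):ℝ) ≤ (a:ℝ)/(q:ℝ)^4 := by
    rw [le_div_iff₀ hq4R]
    have := Int.ediv_mul_le a (ne_of_gt hq4)
    exact_mod_cast this
  have bB : ((B:ℤ):ℝ) ≤ (b:ℝ)/(q:ℝ)^6 := by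
    rw [le_div_iff₀ hq6R]
    have := Int.ediv_mul_le b (ne_of_gt hq6)
    exact_mod_cast this
  calc (S.ncard : ℝ) ≤ (((A + 1 - -A).toNat * (B + 1 - -B).toNat : ℕ) : ℝ) := by exact_mod_cast hle
    _ = (2*(A:ℝ)+1) * (2*(B:ℝ)+1) := by rw [Nat.cast_mul, cA, cB]
    _ ≤ (2*α/(q:ℝ)^4+1) * (2*β/(q:ℝ)^6+1) := by
        have h1 : (0:ℝ) ≤ 2*(A:ℝ)+1 := by
          have : (0:ℝ) ≤ (A:ℝ) := by exact_mod_cast hAnn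
          linarith
        have h2 : (0:ℝ) ≤ 2*(B:ℝ)+1 := by
          have : (0:ℝ) ≤ (B:ℝ) := by exact_mod_cast hBnn
          linarith
        have m1 : 2*(A:ℝ)+1 ≤ 2*α/(q:ℝ)^4+1 := by
          rw [mul_div_assoc]
          have : (a:ℝ)/(q:ℝ)^4 ≤ α/(q:ℝ)^4 := by gcongr
          linarith
        have m2 : 2*(B:ℝ)+1 ≤ 2*β/(q:ℝ)^6+1 := by
          rw [mul_div_assoc]
          have : (b:ℝ)/(q:ℝ)^6 ≤ β/(q:ℝ)^6 := by gcongr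
          linarith
        exact mul_le_mul m1 m2 h2 (le_trans h1 m1)
lemma main_count (Y X : ℝ) (hY : 2 ≤ Y) (hX : 1 ≤ X) :
    (({x ∈ latticeBox 2 ![3,2] ![1/4,1/27] X |
        ∃ p : Nat.Primes, Y < (p:ℕ) ∧ padicEmbed 2 p x ∈ Uell p}).ncard : ℝ)
      ≤ 2*(2*MaR X+1) + 1 +
        ∑ q ∈ Finset.Ioc ⌊Y⌋₊ ⌈X ^ ((12:ℝ)⁻¹)⌉₊,
          (2*MaR X/(q:ℝ)^4+1) * (2*MbR X/(q:ℝ)^6+1) := by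
  classical
  have hX0 : (0:ℝ) < X := by linarith
  have hMa : 0 < MaR X := Real.rpow_pos_of_pos (by linarith) _
  have hMb : 0 < MbR X := Real.rpow_pos_of_pos (by linarith) _
  set a := ⌊MaR X⌋ with hadef
  set b := ⌊MbR X⌋ with hbdef
  set N := ⌊Y⌋₊ with hNdef
  set Z := ⌈X ^ ((12:ℝ)⁻¹)⌉₊ with hZdef
  have ha : 0 ≤ a := Int.floor_nonneg.2 hMa.le
  have hb : 0 ≤ b := Int.floor_nonneg.2 hMb.le
  have haR : (a:ℝ) ≤ MaR X := Int.floor_le _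
  have hbR : (b:ℝ) ≤ MbR X := Int.floor_le _
  have hN2 : 2 ≤ N := Nat.le_floor (by exact_mod_cast hY)
  set E1s := setOf fun x : Fin 2 → ℤ => x 0 ∈ Set.Icc (-a) a ∧ 27*(x 1)^2 = -(4*(x 0)^3)
    with hE1def
  set Z0s := setOf fun x : Fin 2 → ℤ => x 0 = 0 ∧ x 1 = 0 with hZ0def
  set T : ℕ → Set (Fin 2 → ℤ) := fun q => setOf fun x : Fin 2 → ℤ =>
      x 0 ∈ Set.Icc (-a) a ∧ x 1 ∈ Set.Icc (-b) b ∧ (q:ℤ)^4 ∣ x 0 ∧ (q:ℤ)^6 ∣ x 1 with hTdef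
  set E := {x ∈ latticeBox 2 ![3,2] ![1/4,1/27] X |
        ∃ p : Nat.Primes, Y < (p:ℕ) ∧ padicEmbed 2 p x ∈ Uell p} with hEdef
  -- box coordinates land in Icc
  have hbox_mem : ∀ x ∈ latticeBox 2 ![3,2] ![1/4,1/27] X,
      x 0 ∈ Set.Icc (-a) a ∧ x 1 ∈ Set.Icc (-b) b := by
    intro x hx
    rw [mem_latticeBox_iff] at hx
    obtain ⟨h0, h1⟩ := hx
    rw [abs_le] at h0 h1
    constructor
    · exact ⟨by rw [neg_le]; exact Int.le_floor.2 (by push_cast; linarith [h0.1]),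
        Int.le_floor.2 h0.2⟩
    · exact ⟨by rw [neg_le]; exact Int.le_floor.2 (by push_cast; linarith [h1.1]),
        Int.le_floor.2 h1.2⟩
  -- the covering
  have hcover : E ⊆ E1s ∪ (Z0s ∪ ⋃ q ∈ Finset.Ioc N Z, T q) := by
    intro x hx
    obtain ⟨hbox, p, hYp, hU⟩ := hx
    obtain ⟨hI0, hI1⟩ := hbox_mem x hbox
    rw [mem_Uell_iff] at hU
    rcases hU with heq | ⟨hd4, hd6⟩
    · left
      exact ⟨hI0, by linarith [heq]⟩
    right
    by_cases hpZ : (p:ℕ) ≤ Z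
    · right
      have hmemIoc : ((p:ℕ) : ℕ) ∈ Finset.Ioc N Z := by
        rw [Finset.mem_Ioc]
        constructor
        · have h1 : (N:ℝ) ≤ Y := Nat.floor_le (by linarith)
          have : (N:ℝ) < ((p:ℕ):ℝ) := lt_of_le_of_lt h1 hYp
          exact_mod_cast this
        · exact hpZ
      exact Set.mem_biUnion hmemIoc ⟨hI0, hI1, hd4, hd6⟩
    · left
      push_neg at hpZ
      rw [mem_latticeBox_iff] at hbox
      have hZp : X ^ ((12:ℝ)⁻¹) < ((p:ℕ):ℝ) := by
        calc X ^ ((12:ℝ)⁻¹) ≤ (Z:ℝ) := Nat.le_ceil _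
          _ < ((p:ℕ):ℝ) := by exact_mod_cast hpZ
      have hx12nn : (0:ℝ) ≤ X ^ ((12:ℝ)⁻¹) := (Real.rpow_pos_of_pos hX0 _).le
      have h0 : x 0 = 0 := by
        by_contra h
        have habs : ((p:ℕ):ℤ)^4 ≤ |x 0| :=
          Int.le_of_dvd (abs_pos.2 h) ((dvd_abs _ _).2 hd4)
        have h2 : MaR X ≤ X ^ ((3:ℝ)⁻¹) :=
          Real.rpow_le_rpow (by linarith) (by linarith) (by norm_num)
        have h3 : X ^ ((3:ℝ)⁻¹) = (X ^ ((12:ℝ)⁻¹))^(4:ℕ) := by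
          rw [← Real.rpow_natCast (X ^ ((12:ℝ)⁻¹)) 4, ← Real.rpow_mul hX0.le]
          norm_num
        have h4 : (X ^ ((12:ℝ)⁻¹))^(4:ℕ) < ((p:ℕ):ℝ)^(4:ℕ) :=
          pow_lt_pow_left₀ hZp hx12nn (by norm_num)
        have h5 : |(x 0 : ℝ)| ≤ MaR X := hbox.1
        have : (((p:ℕ):ℤ)^4 : ℝ) ≤ |(x 0 : ℝ)| := by
          rw [← Int.cast_abs]
          exact_mod_cast habs
        push_cast at this
        linarith
      have h1 : x 1 = 0 := by
        by_contra h
        have habs : ((p:ℕ):ℤ)^6 ≤ |x 1| :=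
          Int.le_of_dvd (abs_pos.2 h) ((dvd_abs _ _).2 hd6)
        have h2 : MbR X ≤ X ^ ((2:ℝ)⁻¹) :=
          Real.rpow_le_rpow (by linarith) (by linarith) (by norm_num)
        have h3 : X ^ ((2:ℝ)⁻¹) = (X ^ ((12:ℝ)⁻¹))^(6:ℕ) := by
          rw [← Real.rpow_natCast (X ^ ((12:ℝ)⁻¹)) 6, ← Real.rpow_mul hX0.le]
          norm_num
        have h4 : (X ^ ((12:ℝ)⁻¹))^(6:ℕ) < ((p:ℕ):ℝ)^(6:ℕ) :=
          pow_lt_pow_left₀ hZp hx12nn (by norm_num)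
        have h5 : |(x 1 : ℝ)| ≤ MbR X := hbox.2
        have : (((p:ℕ):ℤ)^6 : ℝ) ≤ |(x 1 : ℝ)| := by
          rw [← Int.cast_abs]
          exact_mod_cast habs
        push_cast at this
        linarith
      exact ⟨h0, h1⟩
  -- finiteness and cardinality facts
  have hE1 := E1_count a (MaR X) ha haR
  have hZ0fin : Z0s.Finite := by
    apply Set.Finite.subset (Set.finite_singleton (![0,0]))
    intro x hx
    have : x = ![0,0] := by
      funext i; fin_cases i
      · exact hx.1
      · exact hx.2
    simp [this]
  have hZ0card : Z0s.ncard ≤ 1 := by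
    have := Set.ncard_le_ncard (show Z0s ⊆ {![0,0]} by
      intro x hx
      have : x = ![0,0] := by
        funext i; fin_cases i
        · exact hx.1
        · exact hx.2
      simp [this]) (Set.finite_singleton _)
    simpa using this
  have hTq : ∀ q ∈ Finset.Ioc N Z, (T q).Finite ∧
      ((T q).ncard : ℝ) ≤ (2*MaR X/(q:ℝ)^4+1) * (2*MbR X/(q:ℝ)^6+1) := by
    intro q hq
    have : 1 ≤ q := by
      have := (Finset.mem_Ioc.1 hq).1
      omega
    exact Tq_count a b (MaR X) (MbR X) ha hb haR hbR q this
  have hUfin : (⋃ q ∈ Finset.Ioc N Z, T q).Finite := by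
    apply Set.Finite.biUnion (Finset.Ioc N Z).finite_toSet
    intro q hq
    exact (hTq q hq).1
  -- natural number inequality
  have hsub1 : E.ncard ≤ (E1s ∪ (Z0s ∪ ⋃ q ∈ Finset.Ioc N Z, T q)).ncard :=
    Set.ncard_le_ncard hcover ((hE1.1.union (hZ0fin.union hUfin)))
  have hsub2 : (E1s ∪ (Z0s ∪ ⋃ q ∈ Finset.Ioc N Z, T q)).ncard ≤
      E1s.ncard + (Z0s.ncard + (⋃ q ∈ Finset.Ioc N Z, T q).ncard) :=
    (Set.ncard_union_le _ _).trans (by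
      have := Set.ncard_union_le Z0s (⋃ q ∈ Finset.Ioc N Z, T q)
      omega)
  have hsub3 : (⋃ q ∈ Finset.Ioc N Z, T q).ncard ≤ ∑ q ∈ Finset.Ioc N Z, (T q).ncard :=
    ncard_biUnion_le _ _
  -- pass to the reals
  have cast1 : (E.ncard : ℝ) ≤ (E1s.ncard : ℝ) + 1 + ∑ q ∈ Finset.Ioc N Z, ((T q).ncard : ℝ) := by
    push_cast
    have : E.ncard ≤ E1s.ncard + 1 + ∑ q ∈ Finset.Ioc N Z, (T q).ncard := by omega
    exact_mod_cast this
  refine cast1.trans ?_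
  have hsum : ∑ q ∈ Finset.Ioc N Z, ((T q).ncard : ℝ) ≤
      ∑ q ∈ Finset.Ioc N Z, (2*MaR X/(q:ℝ)^4+1) * (2*MbR X/(q:ℝ)^6+1) :=
    Finset.sum_le_sum (fun q hq => (hTq q hq).2)
  linarith [hE1.2]
noncomputable def errT (X : ℝ) : ℝ := (4*MaR X+3)/(4*MaR X*MbR X) +
  (⌈X ^ ((12:ℝ)⁻¹)⌉₊:ℝ) * (1/(2*MbR X) + 1/(2*MaR X) + 1/(4*MaR X*MbR X))

lemma ratio_bound (Y X : ℝ) (hY : 2 ≤ Y) (hX : 1 ≤ X) :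
    (({x ∈ latticeBox 2 ![3,2] ![1/4,1/27] X |
        ∃ p : Nat.Primes, Y < (p:ℕ) ∧ padicEmbed 2 p x ∈ Uell p}).ncard : ℝ)
      / boxVol 2 ![3,2] ![1/4,1/27] X ≤ 2/Y + errT X := by
  have hX0 : (0:ℝ) < X := by linarith
  have hMa : 0 < MaR X := Real.rpow_pos_of_pos (by linarith) _
  have hMb : 0 < MbR X := Real.rpow_pos_of_pos (by linarith) _
  have hV : 0 < boxVol 2 ![3,2] ![1/4,1/27] X := by
    rw [boxVol_eq]; positivity
  have hVeq : boxVol 2 ![3,2] ![1/4,1/27] X = 4*MaR X*MbR X := boxVol_eq X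
  set N := ⌊Y⌋₊ with hNdef
  set Z := ⌈X ^ ((12:ℝ)⁻¹)⌉₊ with hZdef
  set S := 1/(2*MbR X) + 1/(2*MaR X) + 1/(4*MaR X*MbR X) with hSdef
  have hS0 : 0 ≤ S := by rw [hSdef]; positivity
  have hN2 : 2 ≤ N := Nat.le_floor (by exact_mod_cast hY)
  have h1 : (({x ∈ latticeBox 2 ![3,2] ![1/4,1/27] X |
        ∃ p : Nat.Primes, Y < (p:ℕ) ∧ padicEmbed 2 p x ∈ Uell p}).ncard : ℝ)
        / boxVol 2 ![3,2] ![1/4,1/27] X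
      ≤ (2*(2*MaR X+1) + 1 + ∑ q ∈ Finset.Ioc N Z,
          (2*MaR X/(q:ℝ)^4+1) * (2*MbR X/(q:ℝ)^6+1)) / boxVol 2 ![3,2] ![1/4,1/27] X :=
    (div_le_div_iff_of_pos_right hV).2 (main_count Y X hY hX)
  refine h1.trans ?_
  rw [hVeq, add_div, Finset.sum_div]
  have per_q : ∀ q ∈ Finset.Ioc N Z,
      (2*MaR X/(q:ℝ)^4+1) * (2*MbR X/(q:ℝ)^6+1) / (4*MaR X*MbR X) ≤ ((q:ℝ)^2)⁻¹ + S := by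
    intro q hq
    have hq1 : (1:ℝ) ≤ (q:ℝ) := by
      have h := (Finset.mem_Ioc.1 hq).1
      have : 1 ≤ q := by omega
      exact_mod_cast this
    have hq0 : (0:ℝ) < (q:ℝ) := by linarith
    have heq : (2*MaR X/(q:ℝ)^4+1) * (2*MbR X/(q:ℝ)^6+1) / (4*MaR X*MbR X)
        = ((q:ℝ)^10)⁻¹ + (1/(2*MbR X))*((q:ℝ)^4)⁻¹ + (1/(2*MaR X))*((q:ℝ)^6)⁻¹
          + 1/(4*MaR X*MbR X) := by
      field_simp
      ring
    rw [heq, hSdef]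
    have b1 : ((q:ℝ)^10)⁻¹ ≤ ((q:ℝ)^2)⁻¹ :=
      inv_anti₀ (by positivity) (pow_le_pow_right₀ hq1 (by norm_num))
    have b2 : ((q:ℝ)^4)⁻¹ ≤ 1 := inv_le_one_of_one_le₀ (one_le_pow₀ hq1)
    have b3 : ((q:ℝ)^6)⁻¹ ≤ 1 := inv_le_one_of_one_le₀ (one_le_pow₀ hq1)
    have c2 : (1/(2*MbR X))*((q:ℝ)^4)⁻¹ ≤ 1/(2*MbR X) :=
      mul_le_of_le_one_right (by positivity) b2
    have c3 : (1/(2*MaR X))*((q:ℝ)^6)⁻¹ ≤ 1/(2*MaR X) :=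
      mul_le_of_le_one_right (by positivity) b3
    linarith
  have sum_le : ∑ q ∈ Finset.Ioc N Z,
      (2*MaR X/(q:ℝ)^4+1) * (2*MbR X/(q:ℝ)^6+1) / (4*MaR X*MbR X)
      ≤ (N:ℝ)⁻¹ + (Z:ℝ) * S := by
    calc ∑ q ∈ Finset.Ioc N Z,
        (2*MaR X/(q:ℝ)^4+1) * (2*MbR X/(q:ℝ)^6+1) / (4*MaR X*MbR X)
        ≤ ∑ q ∈ Finset.Ioc N Z, (((q:ℝ)^2)⁻¹ + S) := Finset.sum_le_sum per_q
      _ = (∑ q ∈ Finset.Ioc N Z, ((q:ℝ)^2)⁻¹) + (Finset.Ioc N Z).card * S := by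
          rw [Finset.sum_add_distrib, Finset.sum_const, nsmul_eq_mul]
      _ ≤ (N:ℝ)⁻¹ + (Z:ℝ) * S := by
          have hsq : (∑ q ∈ Finset.Ioc N Z, ((q:ℝ)^2)⁻¹) ≤ (N:ℝ)⁻¹ := by
            by_cases hNZ : N ≤ Z
            · refine (sum_Ioc_inv_sq_le_sub (by omega) hNZ).trans ?_
              have : (0:ℝ) ≤ (Z:ℝ)⁻¹ := by positivity
              linarith
            · rw [Finset.Ioc_eq_empty (by omega)]
              simp only [Finset.sum_empty]
              positivity
          have hcard : ((Finset.Ioc N Z).card : ℝ) ≤ (Z:ℝ) := by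
            rw [Nat.card_Ioc]
            exact_mod_cast Nat.sub_le Z N
          exact add_le_add hsq (mul_le_mul_of_nonneg_right hcard hS0)
  have hNY : (N:ℝ)⁻¹ ≤ 2/Y := by
    have h1 : Y - 1 < (N:ℝ) := Nat.sub_one_lt_floor Y
    have h2 : Y/2 ≤ (N:ℝ) := by linarith
    have hY0 : (0:ℝ) < Y/2 := by linarith
    calc (N:ℝ)⁻¹ ≤ (Y/2)⁻¹ := inv_anti₀ hY0 h2
      _ = 2/Y := by rw [inv_div]
  have hfirst : (2*(2*MaR X+1) + 1) / (4*MaR X*MbR X) = (4*MaR X+3)/(4*MaR X*MbR X) := by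
    ring
  have herr : errT X = (4*MaR X+3)/(4*MaR X*MbR X) + (Z:ℝ) * S := rfl
  rw [herr, hfirst]
  linarith [sum_le, hNY]
lemma rpow_squeeze (g : ℝ → ℝ) (c d : ℝ) (hd : 0 < d)
    (h0 : ∀ᶠ X in atTop, 0 ≤ g X) (hub : ∀ᶠ X in atTop, g X ≤ c * X ^ (-d)) :
    Tendsto g atTop (𝓝 0) := by
  have hlim : Tendsto (fun X : ℝ => c * X ^ (-d)) atTop (𝓝 0) := by
    simpa using (tendsto_rpow_neg_atTop hd).const_mul c
  exact tendsto_of_tendsto_of_tendsto_of_le_of_le' tendsto_const_nhds hlim h0 hub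

lemma M_bounds (X : ℝ) (hX : 1 ≤ X) :
    (1/2) * X^((3:ℝ)⁻¹) ≤ MaR X ∧ MaR X ≤ X^((3:ℝ)⁻¹) ∧
    (1/6) * X^((2:ℝ)⁻¹) ≤ MbR X ∧ MbR X ≤ X^((2:ℝ)⁻¹) ∧
    (⌈X ^ ((12:ℝ)⁻¹)⌉₊:ℝ) ≤ 2 * X^((12:ℝ)⁻¹) := by
  have hX0 : (0:ℝ) < X := by linarith
  have e8 : ((1/8:ℝ)) ^ ((3:ℝ)⁻¹) = 1/2 := by
    rw [show (1/8:ℝ) = (1/2)^(3:ℕ) by norm_num, ← Real.rpow_natCast ((1/2):ℝ) 3,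
      ← Real.rpow_mul (by norm_num)]
    norm_num
  have e36 : ((1/36:ℝ)) ^ ((2:ℝ)⁻¹) = 1/6 := by
    rw [show (1/36:ℝ) = (1/6)^(2:ℕ) by norm_num, ← Real.rpow_natCast ((1/6):ℝ) 2,
      ← Real.rpow_mul (by norm_num)]
    norm_num
  refine ⟨?_, ?_, ?_, ?_, ?_⟩
  · calc (1/2) * X^((3:ℝ)⁻¹) = (1/8:ℝ)^((3:ℝ)⁻¹) * X^((3:ℝ)⁻¹) := by rw [e8]
      _ = ((1/8)*X)^((3:ℝ)⁻¹) := (Real.mul_rpow (by norm_num) hX0.le).symm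
      _ ≤ ((1/4)*X)^((3:ℝ)⁻¹) := Real.rpow_le_rpow (by positivity) (by linarith) (by norm_num)
  · exact Real.rpow_le_rpow (by positivity) (by linarith) (by norm_num)
  · calc (1/6) * X^((2:ℝ)⁻¹) = (1/36:ℝ)^((2:ℝ)⁻¹) * X^((2:ℝ)⁻¹) := by rw [e36]
      _ = ((1/36)*X)^((2:ℝ)⁻¹) := (Real.mul_rpow (by norm_num) hX0.le).symm
      _ ≤ ((1/27)*X)^((2:ℝ)⁻¹) := Real.rpow_le_rpow (by positivity) (by linarith) (by norm_num)
  · exact Real.rpow_le_rpow (by positivity) (by linarith) (by norm_num)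
  · have h1 : (1:ℝ) ≤ X ^ ((12:ℝ)⁻¹) := by
      calc (1:ℝ) = (1:ℝ) ^ ((12:ℝ)⁻¹) := (Real.one_rpow _).symm
        _ ≤ X ^ ((12:ℝ)⁻¹) := Real.rpow_le_rpow zero_le_one hX (by norm_num)
    have h2 : (⌈X ^ ((12:ℝ)⁻¹)⌉₊:ℝ) < X ^ ((12:ℝ)⁻¹) + 1 := Nat.ceil_lt_add_one (by linarith)
    linarith

set_option maxHeartbeats 1000000 in
lemma errT_tendsto : Tendsto errT atTop (𝓝 0) := by
  have hsplit : errT = fun X => (4*MaR X+3)/(4*MaR X*MbR X)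
      + (⌈X ^ ((12:ℝ)⁻¹)⌉₊:ℝ) * (1/(2*MbR X))
      + (⌈X ^ ((12:ℝ)⁻¹)⌉₊:ℝ) * (1/(2*MaR X))
      + (⌈X ^ ((12:ℝ)⁻¹)⌉₊:ℝ) * (1/(4*MaR X*MbR X)) := by
    funext X
    unfold errT
    ring
  rw [hsplit]
  have base : ∀ᶠ X : ℝ in atTop, (1:ℝ) ≤ X := eventually_ge_atTop 1
  have hMa : ∀ᶠ X : ℝ in atTop, 0 < MaR X := by
    filter_upwards [base] with X hX
    exact Real.rpow_pos_of_pos (by linarith) _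
  have hMb : ∀ᶠ X : ℝ in atTop, 0 < MbR X := by
    filter_upwards [base] with X hX
    exact Real.rpow_pos_of_pos (by linarith) _
  have t1 : Tendsto (fun X => (4*MaR X+3)/(4*MaR X*MbR X)) atTop (𝓝 0) := by
    apply rpow_squeeze _ 21 (1/2) (by norm_num)
    · filter_upwards [hMa, hMb] with X h1 h2
      positivity
    · filter_upwards [base, hMa, hMb] with X hX h1 h2
      obtain ⟨m1, m2, m3, m4, m5⟩ := M_bounds X hX
      have hX0 : (0:ℝ) < X := by linarith
      have hnum : 4*MaR X+3 ≤ 7 * X^((3:ℝ)⁻¹) := by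
        have : (1:ℝ) ≤ X^((3:ℝ)⁻¹) := by
          calc (1:ℝ) = (1:ℝ) ^ ((3:ℝ)⁻¹) := (Real.one_rpow _).symm
            _ ≤ X ^ ((3:ℝ)⁻¹) := Real.rpow_le_rpow zero_le_one hX (by norm_num)
        linarith
      have hden : (1/3) * X^((5:ℝ)/6) ≤ 4*MaR X*MbR X := by
        have hq : (0:ℝ) ≤ X^((2:ℝ)⁻¹) := (Real.rpow_pos_of_pos hX0 _).le
        have hp : (0:ℝ) ≤ X^((3:ℝ)⁻¹) := (Real.rpow_pos_of_pos hX0 _).le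
        have key : X^((3:ℝ)⁻¹) * X^((2:ℝ)⁻¹) = X^((5:ℝ)/6) := by
          rw [← Real.rpow_add hX0]
          norm_num
        nlinarith [m1, m3, Real.rpow_pos_of_pos hX0 ((3:ℝ)⁻¹), Real.rpow_pos_of_pos hX0 ((2:ℝ)⁻¹)]
      have hdpos : (0:ℝ) < (1/3) * X^((5:ℝ)/6) := by positivity
      calc (4*MaR X+3)/(4*MaR X*MbR X) ≤ (7 * X^((3:ℝ)⁻¹)) / ((1/3) * X^((5:ℝ)/6)) :=
            div_le_div₀ (by positivity) hnum hdpos hden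
        _ = 21 * X ^ (-(1/2:ℝ)) := by
            rw [show (-(1/2:ℝ)) = (3:ℝ)⁻¹ - (5:ℝ)/6 by norm_num, Real.rpow_sub hX0]
            field_simp
            ring
  have t2 : Tendsto (fun X => (⌈X ^ ((12:ℝ)⁻¹)⌉₊:ℝ) * (1/(2*MbR X))) atTop (𝓝 0) := by
    apply rpow_squeeze _ 6 (5/12) (by norm_num)
    · filter_upwards [hMb] with X h2
      positivity
    · filter_upwards [base, hMb] with X hX h2
      obtain ⟨m1, m2, m3, m4, m5⟩ := M_bounds X hX
      have hX0 : (0:ℝ) < X := by linarith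
      have hq : (0:ℝ) < X^((2:ℝ)⁻¹) := Real.rpow_pos_of_pos hX0 _
      have hr : (0:ℝ) < X^((12:ℝ)⁻¹) := Real.rpow_pos_of_pos hX0 _
      have hb : 1/(2*MbR X) ≤ 3 * X ^ (-(2:ℝ)⁻¹) := by
        rw [Real.rpow_neg hX0.le]
        rw [div_le_iff₀ (by positivity)]
        rw [← Real.rpow_neg hX0.le]
        have expand : 2*MbR X * (3 * X ^ (-(2:ℝ)⁻¹)) = 6 * MbR X * X ^ (-(2:ℝ)⁻¹) := by ring
        have hone : (1:ℝ) ≤ 6 * MbR X * X ^ (-(2:ℝ)⁻¹) := by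
          have : X^((2:ℝ)⁻¹) * X ^ (-(2:ℝ)⁻¹) = 1 := by
            rw [← Real.rpow_add hX0]; norm_num
          have hneg : (0:ℝ) < X ^ (-(2:ℝ)⁻¹) := Real.rpow_pos_of_pos hX0 _
          nlinarith [m3]
        linarith [expand ▸ hone]
      calc (⌈X ^ ((12:ℝ)⁻¹)⌉₊:ℝ) * (1/(2*MbR X))
          ≤ (2 * X^((12:ℝ)⁻¹)) * (3 * X ^ (-(2:ℝ)⁻¹)) := by
            apply mul_le_mul m5 hb (by positivity) (by positivity)
        _ = 6 * X ^ (-(5/12:ℝ)) := by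
            rw [show (-(5/12:ℝ)) = (12:ℝ)⁻¹ + (-(2:ℝ)⁻¹) by norm_num, Real.rpow_add hX0]
            ring
  have t3 : Tendsto (fun X => (⌈X ^ ((12:ℝ)⁻¹)⌉₊:ℝ) * (1/(2*MaR X))) atTop (𝓝 0) := by
    apply rpow_squeeze _ 2 (1/4) (by norm_num)
    · filter_upwards [hMa] with X h2
      positivity
    · filter_upwards [base, hMa] with X hX h2
      obtain ⟨m1, m2, m3, m4, m5⟩ := M_bounds X hX
      have hX0 : (0:ℝ) < X := by linarith
      have hb : 1/(2*MaR X) ≤ X ^ (-(3:ℝ)⁻¹) := by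
        rw [div_le_iff₀ (by positivity)]
        have hone : (1:ℝ) ≤ X ^ (-(3:ℝ)⁻¹) * (2 * MaR X) := by
          have : X^((3:ℝ)⁻¹) * X ^ (-(3:ℝ)⁻¹) = 1 := by
            rw [← Real.rpow_add hX0]; norm_num
          have hneg : (0:ℝ) < X ^ (-(3:ℝ)⁻¹) := Real.rpow_pos_of_pos hX0 _
          nlinarith [m1]
        linarith [hone]
      calc (⌈X ^ ((12:ℝ)⁻¹)⌉₊:ℝ) * (1/(2*MaR X))
          ≤ (2 * X^((12:ℝ)⁻¹)) * (X ^ (-(3:ℝ)⁻¹)) := by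
            apply mul_le_mul m5 hb (by positivity) (by positivity)
        _ = 2 * X ^ (-(1/4:ℝ)) := by
            rw [show (-(1/4:ℝ)) = (12:ℝ)⁻¹ + (-(3:ℝ)⁻¹) by norm_num, Real.rpow_add hX0]
            ring
  have t4 : Tendsto (fun X => (⌈X ^ ((12:ℝ)⁻¹)⌉₊:ℝ) * (1/(4*MaR X*MbR X))) atTop (𝓝 0) := by
    apply rpow_squeeze _ 6 (3/4) (by norm_num)
    · filter_upwards [hMa, hMb] with X h1 h2
      positivity
    · filter_upwards [base, hMa, hMb] with X hX h1 h2
      obtain ⟨m1, m2, m3, m4, m5⟩ := M_bounds X hX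
      have hX0 : (0:ℝ) < X := by linarith
      have hb : 1/(4*MaR X*MbR X) ≤ 3 * X ^ (-(5:ℝ)/6) := by
        rw [div_le_iff₀ (by positivity)]
        have key : X^((5:ℝ)/6) * X ^ (-(5:ℝ)/6) = 1 := by
          rw [← Real.rpow_add hX0]; norm_num
        have key2 : X^((3:ℝ)⁻¹) * X^((2:ℝ)⁻¹) = X^((5:ℝ)/6) := by
          rw [← Real.rpow_add hX0]
          norm_num
        have hneg : (0:ℝ) < X ^ (-(5:ℝ)/6) := Real.rpow_pos_of_pos hX0 _
        have hp : (0:ℝ) < X^((3:ℝ)⁻¹) := Real.rpow_pos_of_pos hX0 _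
        have hq : (0:ℝ) < X^((2:ℝ)⁻¹) := Real.rpow_pos_of_pos hX0 _
        have hden : (1/3) * X^((5:ℝ)/6) ≤ 4*MaR X*MbR X := by
          nlinarith [m1, m3]
        nlinarith [hden]
      calc (⌈X ^ ((12:ℝ)⁻¹)⌉₊:ℝ) * (1/(4*MaR X*MbR X))
          ≤ (2 * X^((12:ℝ)⁻¹)) * (3 * X ^ (-(5:ℝ)/6)) := by
            apply mul_le_mul m5 hb (by positivity) (by positivity)
        _ = 6 * X ^ (-(3/4:ℝ)) := by
            rw [show (-(3/4:ℝ)) = (12:ℝ)⁻¹ + (-(5:ℝ)/6) by norm_num, Real.rpow_add hX0]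
            ring
  have := ((t1.add t2).add t3).add t4
  simpa using this
lemma main_admissible :
    Tendsto (fun Y : ℝ =>
      limsup (fun X : ℝ =>
        (({x ∈ latticeBox 2 ![3,2] ![1/4,1/27] X |
            ∃ p : Nat.Primes, Y < (p : ℕ) ∧ padicEmbed 2 p x ∈ Uell p}).ncard : ℝ)
          / boxVol 2 ![3,2] ![1/4,1/27] X) atTop)
    atTop (𝓝 0) := by
  set G : ℝ → ℝ := fun Y =>
      limsup (fun X : ℝ =>
        (({x ∈ latticeBox 2 ![3,2] ![1/4,1/27] X |
            ∃ p : Nat.Primes, Y < (p : ℕ) ∧ padicEmbed 2 p x ∈ Uell p}).ncard : ℝ)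
          / boxVol 2 ![3,2] ![1/4,1/27] X) atTop with hGdef
  have hfacts : ∀ Y : ℝ, 2 ≤ Y → 0 ≤ G Y ∧ G Y ≤ 2/Y := by
    intro Y hY
    set f : ℝ → ℝ := fun X =>
        (({x ∈ latticeBox 2 ![3,2] ![1/4,1/27] X |
            ∃ p : Nat.Primes, Y < (p : ℕ) ∧ padicEmbed 2 p x ∈ Uell p}).ncard : ℝ)
          / boxVol 2 ![3,2] ![1/4,1/27] X with hfdef
    have hub : ∀ᶠ X in atTop, f X ≤ 2/Y + errT X := by
      filter_upwards [eventually_ge_atTop (1:ℝ)] with X hX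
      exact ratio_bound Y X hY hX
    have hnn : ∀ᶠ X in atTop, 0 ≤ f X := by
      filter_upwards [eventually_ge_atTop (1:ℝ)] with X hX
      have hV : 0 < boxVol 2 ![3,2] ![1/4,1/27] X := by
        rw [boxVol_eq]
        have : (0:ℝ) < X := by linarith
        have h1 : 0 < MaR X := Real.rpow_pos_of_pos (by linarith) _
        have h2 : 0 < MbR X := Real.rpow_pos_of_pos (by linarith) _
        positivity
      exact div_nonneg (by positivity) hV.le
    have hg : Tendsto (fun X : ℝ => 2/Y + errT X) atTop (𝓝 (2/Y)) := by
      have h0 : Tendsto (fun _ : ℝ => 2/Y) atTop (𝓝 (2/Y)) := tendsto_const_nhds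
      simpa using h0.add errT_tendsto
    have hbddg : IsBoundedUnder (· ≤ ·) atTop (fun X : ℝ => 2/Y + errT X) :=
      hg.isBoundedUnder_le
    have hcob : IsCoboundedUnder (· ≤ ·) atTop f :=
      (isBoundedUnder_of_eventually_ge hnn).isCoboundedUnder_le
    have hbddf : IsBoundedUnder (· ≤ ·) atTop f := by
      obtain ⟨C, hC⟩ := hbddg
      refine ⟨C, ?_⟩
      simp only [eventually_map] at hC ⊢
      filter_upwards [hub, hC] with X h1 h2
      exact h1.trans h2
    constructor
    · exact le_limsup_of_frequently_le hnn.frequently hbddf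
    · have h1 : G Y ≤ limsup (fun X : ℝ => 2/Y + errT X) atTop :=
        limsup_le_limsup hub hcob hbddg
      rwa [hg.limsup_eq] at h1
  have h2Y : Tendsto (fun Y : ℝ => 2/Y) atTop (𝓝 0) :=
    Tendsto.div_atTop tendsto_const_nhds tendsto_id
  apply tendsto_of_tendsto_of_tendsto_of_le_of_le' tendsto_const_nhds h2Y
  · filter_upwards [eventually_ge_atTop (2:ℝ)] with Y hY
    exact (hfacts Y hY).1
  · filter_upwards [eventually_ge_atTop (2:ℝ)] with Y hY
    exact (hfacts Y hY).2


theorem ellipticCurveFamily_ekedahlAdmissible :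
    EkedahlAdmissible 2 ![3, 2] ![1/4, 1/27]
      (fun p : Nat.Primes =>
        {x : Fin 2 → ℤ_[p] | 4 * (x 0) ^ 3 + 27 * (x 1) ^ 2 = 0 ∨
          ((p : ℤ_[p]) ^ 4 ∣ x 0 ∧ (p : ℤ_[p]) ^ 6 ∣ x 1)}) := by
  unfold EkedahlAdmissible
  exact main_admissible

end
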